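/- Eigenvalues of the QSVE walk operator encode the singular values: let A ∈ ℝ^{N₁×N₂} be a nonzero matrix all of whose rows are nonzero, let P ∈ ℝ^{(N₁·N₂)×N₁} and Q ∈ ℝ^{(N₁·N₂)×N₂} be defined by P((i,j), i') = [i = i']·A(i,j)/‖A_i‖₂ and Q((i,j), j') = [j = j']·‖A_i‖₂/‖A‖_F, and set W := (2PPᵀ − I)(2QQᵀ − I) ∈ ℝ^{(N₁·N₂)×(N₁·N₂)}. Then for every nonzero singular value σ of A there exists θ ∈ [0, π] with cos(θ/2) = σ/‖A‖_F such that both e^{iθ} and e^{−iθ} are eigenvalues of W (regarded as a complex matrix); i.e., there exist nonzero w± ∈ ℂ^{N₁·N₂} with W w± = e^{±iθ} w±. -/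

import Mathlib

open scoped BigOperators Matrix

/-- Euclidean norm of the `i`-th row of `A`. -/
noncomputable def rowNorm {N₁ N₂ : ℕ} (A : Matrix (Fin N₁) (Fin N₂) ℝ) (i : Fin N₁) : ℝ :=
  Real.sqrt (∑ j : Fin N₂, A i j ^ 2)

/-- Frobenius norm of `A`. -/
noncomputable def frobNorm {N₁ N₂ : ℕ} (A : Matrix (Fin N₁) (Fin N₂) ℝ) : ℝ :=
  Real.sqrt (∑ i : Fin N₁, ∑ j : Fin N₂, A i j ^ 2)

/-- The Kerenidis–Prakash factor `P ∈ ℝ^{(N₁·N₂) × N₁}`: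
`P((i,j), i') = [i = i'] · A(i,j)/‖A_i‖₂`, realizing `|i⟩|0⟩ ↦ |i⟩|A_i⟩`. -/
noncomputable def Pmat {N₁ N₂ : ℕ} (A : Matrix (Fin N₁) (Fin N₂) ℝ) :
    Matrix (Fin N₁ × Fin N₂) (Fin N₁) ℝ :=
  Matrix.of fun p i' => if p.1 = i' then A p.1 p.2 / rowNorm A p.1 else 0

/-- The Kerenidis–Prakash factor `Q ∈ ℝ^{(N₁·N₂) × N₂}`:
`Q((i,j), j') = [j = j'] · ‖A_i‖₂/‖A‖_F`, realizing `|0⟩|j⟩ ↦ |Â⟩|j⟩`. -/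
noncomputable def Qmat {N₁ N₂ : ℕ} (A : Matrix (Fin N₁) (Fin N₂) ℝ) :
    Matrix (Fin N₁ × Fin N₂) (Fin N₂) ℝ :=
  Matrix.of fun p j' => if p.2 = j' then rowNorm A p.1 / frobNorm A else 0

/-- The QSVE walk operator `W = (2PPᵀ - I)(2QQᵀ - I)` used for phase estimation. -/
noncomputable def Wop {N₁ N₂ : ℕ} (A : Matrix (Fin N₁) (Fin N₂) ℝ) :
    Matrix (Fin N₁ × Fin N₂) (Fin N₁ × Fin N₂) ℝ :=
  ((2 : ℝ) • (Pmat A * (Pmat A)ᵀ) - 1) * ((2 : ℝ) • (Qmat A * (Qmat A)ᵀ) - 1)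

private lemma qsve_key (a b c s : ℂ) (h : s^2 + c^2 = 1) :
    (2*c*b - a) - (c + s*Complex.I) * ((4*c^2 - 1)*b - 2*c*a)
      = ((2*c^2 - 1) + (2*s*c)*Complex.I) * (a - (c + s*Complex.I)*b) := by
  have hI : (Complex.I)^2 = -1 := Complex.I_sq
  linear_combination (2*b*c*Complex.I^2) * h + (2*b*c - 2*b*c^3) * hI

/-- **Eigenvalues of the QSVE walk operator encode the singular values:** if `A ≠ 0` has
all rows nonzero and `σ > 0` is a singular value of `A` (i.e. `σ²` is an eigenvalue of
`AᵀA`), then there is `θ ∈ [0, π]` with `cos(θ/2) = σ/‖A‖_F` such that both `e^{iθ}` and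
`e^{-iθ}` are eigenvalues of `W` regarded as a complex matrix. -/
theorem Wop_eigenvalues {N₁ N₂ : ℕ}
    (A : Matrix (Fin N₁) (Fin N₂) ℝ) (hA : A ≠ 0)
    (hrows : ∀ i : Fin N₁, ∃ j : Fin N₂, A i j ≠ 0)
    (σ : ℝ) (hσ : 0 < σ) (hsv : σ ^ 2 ∈ spectrum ℝ (Aᵀ * A)) :
    ∃ θ ∈ Set.Icc (0 : ℝ) Real.pi,
      Real.cos (θ / 2) = σ / frobNorm A ∧
      (∃ wp : Fin N₁ × Fin N₂ → ℂ, wp ≠ 0 ∧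
        (Wop A).map Complex.ofReal *ᵥ wp = Complex.exp (θ * Complex.I) • wp) ∧
      (∃ wm : Fin N₁ × Fin N₂ → ℂ, wm ≠ 0 ∧
        (Wop A).map Complex.ofReal *ᵥ wm = Complex.exp (-θ * Complex.I) • wm) := by
  classical
  -- nonzero entry of A
  obtain ⟨i₀, hi₀⟩ := Function.ne_iff.mp hA
  obtain ⟨j₀, hj₀⟩ := Function.ne_iff.mp hi₀
  have hj₀' : A i₀ j₀ ≠ 0 := by simpa using hj₀
  -- positivity
  have hrpos : ∀ i, 0 < rowNorm A i := by
    intro i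
    obtain ⟨j, hj⟩ := hrows i
    exact Real.sqrt_pos.mpr (Finset.sum_pos' (fun j _ => sq_nonneg _)
      ⟨j, Finset.mem_univ _, by positivity⟩)
  have hrne : ∀ i, rowNorm A i ≠ 0 := fun i => ne_of_gt (hrpos i)
  have hfpos : 0 < frobNorm A := by
    refine Real.sqrt_pos.mpr (Finset.sum_pos'
      (fun i _ => Finset.sum_nonneg fun j _ => sq_nonneg _)
      ⟨i₀, Finset.mem_univ _, Finset.sum_pos' (fun j _ => sq_nonneg _)
        ⟨j₀, Finset.mem_univ _, by positivity⟩⟩)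
  have hfne : frobNorm A ≠ 0 := ne_of_gt hfpos
  have hrsq : ∀ i, rowNorm A i ^ 2 = ∑ j, A i j ^ 2 := fun i =>
    Real.sq_sqrt (Finset.sum_nonneg fun j _ => sq_nonneg _)
  have hfsq : frobNorm A ^ 2 = ∑ i, ∑ j, A i j ^ 2 :=
    Real.sq_sqrt (Finset.sum_nonneg fun i _ => Finset.sum_nonneg fun j _ => sq_nonneg _)
  have hrsum : (∑ i, rowNorm A i ^ 2) = frobNorm A ^ 2 := by
    rw [hfsq]; exact Finset.sum_congr rfl fun i _ => hrsq i
  -- eigenvector of AᵀA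
  rw [spectrum.mem_iff, Matrix.isUnit_iff_isUnit_det, isUnit_iff_ne_zero, not_not] at hsv
  obtain ⟨v, hv0, hv⟩ := Matrix.exists_mulVec_eq_zero_iff.mpr hsv
  have hAv : (Aᵀ * A) *ᵥ v = σ ^ 2 • v := by
    rw [Matrix.sub_mulVec, Algebra.algebraMap_eq_smul_one, Matrix.smul_mulVec,
      Matrix.one_mulVec, sub_eq_zero] at hv
    exact hv.symm
  -- σ ≤ frobNorm A
  obtain ⟨j₁, hj₁⟩ := Function.ne_iff.mp hv0
  have hj₁' : v j₁ ≠ 0 := by simpa using hj₁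
  have hvsq : 0 < ∑ j, v j ^ 2 :=
    Finset.sum_pos' (fun j _ => sq_nonneg _) ⟨j₁, Finset.mem_univ _, by positivity⟩
  have hdot : σ ^ 2 * (∑ j, v j ^ 2) = ∑ i, ((A *ᵥ v) i) ^ 2 := by
    have h2 : v ⬝ᵥ ((Aᵀ * A) *ᵥ v) = (A *ᵥ v) ⬝ᵥ (A *ᵥ v) := by
      rw [← Matrix.mulVec_mulVec, Matrix.dotProduct_mulVec, Matrix.vecMul_transpose]
    rw [hAv] at h2
    have h3 : v ⬝ᵥ (σ ^ 2 • v) = σ ^ 2 * ∑ j, v j ^ 2 := by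
      simp only [dotProduct, Pi.smul_apply, smul_eq_mul, Finset.mul_sum]
      exact Finset.sum_congr rfl fun j _ => by ring
    have h4 : (A *ᵥ v) ⬝ᵥ (A *ᵥ v) = ∑ i, ((A *ᵥ v) i) ^ 2 := by
      simp only [dotProduct]
      exact Finset.sum_congr rfl fun i _ => (sq _).symm
    rw [h3, h4] at h2
    exact h2
  have hCS : (∑ i, ((A *ᵥ v) i) ^ 2) ≤ frobNorm A ^ 2 * ∑ j, v j ^ 2 := by
    rw [hfsq, Finset.sum_mul]
    refine Finset.sum_le_sum fun i _ => ?_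
    have := Finset.sum_mul_sq_le_sq_mul_sq Finset.univ (fun j => A i j) v
    simpa [Matrix.mulVec, dotProduct] using this
  have hσ2 : σ ^ 2 ≤ frobNorm A ^ 2 := by
    by_contra h
    push_neg at h
    nlinarith [hvsq, hdot, hCS]
  have hσf : σ ≤ frobNorm A := by nlinarith [hσ2, hσ, hfpos]
  -- the angle
  set c : ℝ := σ / frobNorm A with hc_def
  have hc0 : 0 < c := div_pos hσ hfpos
  have hc1 : c ≤ 1 := (div_le_one hfpos).mpr hσf
  refine ⟨2 * Real.arccos c, ⟨mul_nonneg (by norm_num) (Real.arccos_nonneg c), ?_⟩, ?_, ?_⟩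
  · have := Real.arccos_le_pi_div_two.mpr (le_of_lt hc0)
    linarith
  · rw [show 2 * Real.arccos c / 2 = Real.arccos c by ring]
    exact Real.cos_arccos (by linarith) hc1
  set θ : ℝ := 2 * Real.arccos c with hθ_def
  have hcos : Real.cos (θ / 2) = c := by
    rw [show θ / 2 = Real.arccos c by rw [hθ_def]; ring]
    exact Real.cos_arccos (by linarith) hc1
  set s : ℝ := Real.sin (θ / 2) with hs_def
  have hs2 : s ^ 2 + c ^ 2 = 1 := by
    rw [hs_def, ← hcos]; exact Real.sin_sq_add_cos_sq _
  have hs2c : (s : ℂ) ^ 2 + (c : ℂ) ^ 2 = 1 := by exact_mod_cast hs2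
  have hs0 : 0 ≤ s := by
    rw [hs_def]
    apply Real.sin_nonneg_of_nonneg_of_le_pi
    · have := Real.arccos_nonneg c; rw [hθ_def]; linarith
    · have h1 := Real.arccos_le_pi c
      have h2 := Real.pi_pos
      rw [hθ_def]; linarith
  have hcosθ : Real.cos θ = 2 * c ^ 2 - 1 := by
    rw [show θ = 2 * (θ / 2) by ring, Real.cos_two_mul, hcos]
  have hsinθ : Real.sin θ = 2 * s * c := by
    rw [show θ = 2 * (θ / 2) by ring, Real.sin_two_mul, ← hs_def, hcos]
  have hexp : Complex.exp (θ * Complex.I) =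
      ((2 * c ^ 2 - 1 : ℝ) : ℂ) + ((2 * s * c : ℝ) : ℂ) * Complex.I := by
    rw [Complex.exp_mul_I]
    rw [← Complex.ofReal_cos, ← Complex.ofReal_sin]
    rw [hcosθ]
    rw [hsinθ]
  have hexp' : Complex.exp (-θ * Complex.I) =
      ((2 * c ^ 2 - 1 : ℝ) : ℂ) + ((2 * (-s) * c : ℝ) : ℂ) * Complex.I := by
    rw [Complex.exp_mul_I]
    rw [Complex.cos_neg, Complex.sin_neg]
    rw [← Complex.ofReal_cos, ← Complex.ofReal_sin]
    rw [hcosθ]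
    rw [hsinθ]
    push_cast; ring
  -- singular vectors
  set u : Fin N₁ → ℝ := σ⁻¹ • (A *ᵥ v) with hu_def
  have hAvu : A *ᵥ v = σ • u := by
    rw [hu_def, smul_inv_smul₀ (ne_of_gt hσ)]
  have hAtu : Aᵀ *ᵥ u = σ • v := by
    rw [hu_def, Matrix.mulVec_smul, Matrix.mulVec_mulVec, hAv, smul_smul,
      show σ⁻¹ * σ ^ 2 = σ by field_simp]
  have hu0 : u ≠ 0 := by
    intro h
    rw [h, Matrix.mulVec_zero] at hAtu
    have hv' : v = 0 := by
      have := hAtu.symm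
      rwa [smul_eq_zero, or_iff_right (ne_of_gt hσ)] at this
    exact hv0 hv'
  obtain ⟨i₁, hi₁⟩ := Function.ne_iff.mp hu0
  have hi₁' : u i₁ ≠ 0 := by simpa using hi₁
  obtain ⟨j₂, hj₂⟩ := hrows i₁
  -- the vectors x and y
  set x : Fin N₁ × Fin N₂ → ℝ := fun p => rowNorm A p.1 / frobNorm A * v p.2 with hx_def
  set y : Fin N₁ × Fin N₂ → ℝ := fun p => A p.1 p.2 / rowNorm A p.1 * u p.1 with hy_def
  have hxp : x (i₁, j₁) ≠ 0 := by
    rw [hx_def]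
    exact mul_ne_zero (div_ne_zero (hrne i₁) hfne) hj₁'
  have hyp : y (i₁, j₂) ≠ 0 := by
    rw [hy_def]
    exact mul_ne_zero (div_ne_zero hj₂ (hrne i₁)) hi₁'
  -- the six mulVec computations
  have hQtx : (Qmat A)ᵀ *ᵥ x = v := by
    funext j'
    have hterm : ∀ i : Fin N₁, (∑ j : Fin N₂, Qmat A (i, j) j' * x (i, j))
        = rowNorm A i ^ 2 * (v j' / frobNorm A ^ 2) := by
      intro i
      have hpt : ∀ j : Fin N₂, Qmat A (i, j) j' * x (i, j)
          = if j = j' then rowNorm A i ^ 2 * (v j' / frobNorm A ^ 2) else 0 := by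
        intro j
        by_cases h : j = j'
        · subst h
          simp only [Qmat, Matrix.of_apply, hx_def, if_pos rfl, ↓reduceIte]
          field_simp
        · simp [Qmat, h]
      rw [Finset.sum_congr rfl fun j _ => hpt j, Finset.sum_ite_eq' Finset.univ j']
      simp
    calc ((Qmat A)ᵀ *ᵥ x) j' = ∑ p : Fin N₁ × Fin N₂, Qmat A p j' * x p := by
          simp [Matrix.mulVec, dotProduct, Matrix.transpose_apply]
      _ = ∑ i, ∑ j, Qmat A (i, j) j' * x (i, j) := Fintype.sum_prod_type _
      _ = ∑ i, rowNorm A i ^ 2 * (v j' / frobNorm A ^ 2) :=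
          Finset.sum_congr rfl fun i _ => hterm i
      _ = (∑ i, rowNorm A i ^ 2) * (v j' / frobNorm A ^ 2) := by rw [Finset.sum_mul]
      _ = v j' := by rw [hrsum]; field_simp
  have hQv : Qmat A *ᵥ v = x := by
    funext p
    have hpt : ∀ j' : Fin N₂, Qmat A p j' * v j'
        = if j' = p.2 then x p else 0 := by
      intro j'
      by_cases h : j' = p.2
      · subst h
        simp [Qmat, hx_def]
      · have h' : ¬ (p.2 = j') := fun e => h e.symm
        simp [Qmat, h', h]
    calc (Qmat A *ᵥ v) p = ∑ j', Qmat A p j' * v j' := rfl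
      _ = ∑ j', if j' = p.2 then x p else 0 := Finset.sum_congr rfl fun j' _ => hpt j'
      _ = x p := by rw [Finset.sum_ite_eq' Finset.univ p.2]; simp
  have hPtx : (Pmat A)ᵀ *ᵥ x = (σ / frobNorm A) • u := by
    funext i'
    have hterm : ∀ i : Fin N₁, (∑ j : Fin N₂, Pmat A (i, j) i' * x (i, j))
        = if i = i' then (∑ j, A i j * v j) / frobNorm A else 0 := by
      intro i
      by_cases h : i = i'
      · subst h
        rw [if_pos rfl, Finset.sum_div]
        refine Finset.sum_congr rfl fun j _ => ?_
        simp only [Pmat, Matrix.of_apply, hx_def, if_pos rfl, ↓reduceIte]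
        field_simp [hrne i, hfne]
      · simp [Pmat, h]
    calc ((Pmat A)ᵀ *ᵥ x) i' = ∑ p : Fin N₁ × Fin N₂, Pmat A p i' * x p := by
          simp [Matrix.mulVec, dotProduct, Matrix.transpose_apply]
      _ = ∑ i, ∑ j, Pmat A (i, j) i' * x (i, j) := Fintype.sum_prod_type _
      _ = ∑ i, if i = i' then (∑ j, A i j * v j) / frobNorm A else 0 :=
          Finset.sum_congr rfl fun i _ => hterm i
      _ = (∑ j, A i' j * v j) / frobNorm A := by
          rw [Finset.sum_ite_eq' Finset.univ i']; simp
      _ = (σ / frobNorm A) • u i' := by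
          have : (∑ j, A i' j * v j) = (A *ᵥ v) i' := rfl
          rw [this, hAvu]
          simp only [Pi.smul_apply, smul_eq_mul]
          ring
  have hPu : Pmat A *ᵥ u = y := by
    funext p
    have hpt : ∀ i' : Fin N₁, Pmat A p i' * u i'
        = if i' = p.1 then y p else 0 := by
      intro i'
      by_cases h : i' = p.1
      · subst h
        simp [Pmat, hy_def]
      · have h' : ¬ (p.1 = i') := fun e => h e.symm
        simp [Pmat, h', h]
    calc (Pmat A *ᵥ u) p = ∑ i', Pmat A p i' * u i' := rfl
      _ = ∑ i', if i' = p.1 then y p else 0 := Finset.sum_congr rfl fun i' _ => hpt i'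
      _ = y p := by rw [Finset.sum_ite_eq' Finset.univ p.1]; simp
  have hPty : (Pmat A)ᵀ *ᵥ y = u := by
    funext i'
    have hterm : ∀ i : Fin N₁, (∑ j : Fin N₂, Pmat A (i, j) i' * y (i, j))
        = if i = i' then u i else 0 := by
      intro i
      by_cases h : i = i'
      · rw [if_pos h, ← h]
        have hthis : ∀ j : Fin N₂, Pmat A (i, j) i * y (i, j)
            = A i j ^ 2 * (u i / rowNorm A i ^ 2) := by
          intro j
          simp only [Pmat, Matrix.of_apply, hy_def, if_pos rfl, ↓reduceIte]
          field_simp [hrne i]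
        rw [Finset.sum_congr rfl fun j _ => hthis j, ← Finset.sum_mul, ← hrsq]
        field_simp [hrne i]
      · simp [Pmat, h]
    calc ((Pmat A)ᵀ *ᵥ y) i' = ∑ p : Fin N₁ × Fin N₂, Pmat A p i' * y p := by
          simp [Matrix.mulVec, dotProduct, Matrix.transpose_apply]
      _ = ∑ i, ∑ j, Pmat A (i, j) i' * y (i, j) := Fintype.sum_prod_type _
      _ = ∑ i, if i = i' then u i else 0 := Finset.sum_congr rfl fun i _ => hterm i
      _ = u i' := by rw [Finset.sum_ite_eq' Finset.univ i' (fun i => u i)]; simp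
  have hQty : (Qmat A)ᵀ *ᵥ y = (σ / frobNorm A) • v := by
    funext j'
    have hterm : ∀ i : Fin N₁, (∑ j : Fin N₂, Qmat A (i, j) j' * y (i, j))
        = A i j' * u i / frobNorm A := by
      intro i
      have hpt : ∀ j : Fin N₂, Qmat A (i, j) j' * y (i, j)
          = if j = j' then A i j' * u i / frobNorm A else 0 := by
        intro j
        by_cases h : j = j'
        · subst h
          simp only [Qmat, Matrix.of_apply, hy_def, if_pos rfl, if_true, eq_self_iff_true]
          field_simp [hrne i]
        · simp [Qmat, h]
      rw [Finset.sum_congr rfl fun j _ => hpt j, Finset.sum_ite_eq' Finset.univ j']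
      simp
    calc ((Qmat A)ᵀ *ᵥ y) j' = ∑ p : Fin N₁ × Fin N₂, Qmat A p j' * y p := by
          simp [Matrix.mulVec, dotProduct, Matrix.transpose_apply]
      _ = ∑ i, ∑ j, Qmat A (i, j) j' * y (i, j) := Fintype.sum_prod_type _
      _ = ∑ i, A i j' * u i / frobNorm A := Finset.sum_congr rfl fun i _ => hterm i
      _ = (∑ i, A i j' * u i) / frobNorm A := by rw [Finset.sum_div]
      _ = (σ / frobNorm A) • v j' := by
          have : (∑ i, A i j' * u i) = (Aᵀ *ᵥ u) j' := by
            simp [Matrix.mulVec, dotProduct, Matrix.transpose_apply]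
          rw [this, hAtu]
          simp only [Pi.smul_apply, smul_eq_mul]
          ring
  -- action of the walk operator
  have hQQx : ((2 : ℝ) • (Qmat A * (Qmat A)ᵀ) - 1) *ᵥ x = x := by
    rw [Matrix.sub_mulVec, Matrix.smul_mulVec, ← Matrix.mulVec_mulVec, hQtx, hQv,
      Matrix.one_mulVec]
    funext p; simp only [Pi.sub_apply, Pi.smul_apply, smul_eq_mul]; ring
  have hPPx : ((2 : ℝ) • (Pmat A * (Pmat A)ᵀ) - 1) *ᵥ x = (2 * c) • y - x := by
    rw [Matrix.sub_mulVec, Matrix.smul_mulVec, ← Matrix.mulVec_mulVec, hPtx,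
      Matrix.mulVec_smul, hPu, Matrix.one_mulVec]
    funext p; simp only [Pi.sub_apply, Pi.smul_apply, smul_eq_mul, hc_def]; ring
  have hPPy : ((2 : ℝ) • (Pmat A * (Pmat A)ᵀ) - 1) *ᵥ y = y := by
    rw [Matrix.sub_mulVec, Matrix.smul_mulVec, ← Matrix.mulVec_mulVec, hPty, hPu,
      Matrix.one_mulVec]
    funext p; simp only [Pi.sub_apply, Pi.smul_apply, smul_eq_mul]; ring
  have hQQy : ((2 : ℝ) • (Qmat A * (Qmat A)ᵀ) - 1) *ᵥ y = (2 * c) • x - y := by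
    rw [Matrix.sub_mulVec, Matrix.smul_mulVec, ← Matrix.mulVec_mulVec, hQty,
      Matrix.mulVec_smul, hQv, Matrix.one_mulVec]
    funext p; simp only [Pi.sub_apply, Pi.smul_apply, smul_eq_mul, hc_def]; ring
  have hWx : Wop A *ᵥ x = (2 * c) • y - x := by
    rw [Wop, ← Matrix.mulVec_mulVec, hQQx, hPPx]
  have hWy : Wop A *ᵥ y = (4 * c ^ 2 - 1) • y - (2 * c) • x := by
    rw [Wop, ← Matrix.mulVec_mulVec, hQQy, Matrix.mulVec_sub, Matrix.mulVec_smul,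
      hPPx, hPPy]
    funext p; simp only [Pi.sub_apply, Pi.smul_apply, smul_eq_mul]; ring
  -- complexification
  set Xc : Fin N₁ × Fin N₂ → ℂ := fun p => ((x p : ℝ) : ℂ) with hXc_def
  set Yc : Fin N₁ × Fin N₂ → ℂ := fun p => ((y p : ℝ) : ℂ) with hYc_def
  have hmap : ∀ w : Fin N₁ × Fin N₂ → ℝ,
      ((Wop A).map Complex.ofReal) *ᵥ (fun p => ((w p : ℝ) : ℂ))
        = fun p => (((Wop A *ᵥ w) p : ℝ) : ℂ) := by
    intro w
    funext p
    simp only [Matrix.mulVec, dotProduct, Matrix.map_apply]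
    push_cast
    rfl
  have hWXc : ((Wop A).map Complex.ofReal) *ᵥ Xc = (2 * (c : ℂ)) • Yc - Xc := by
    rw [hXc_def, hmap x, hWx]
    funext p
    simp only [Pi.sub_apply, Pi.smul_apply, smul_eq_mul, hYc_def]
    push_cast
    ring
  have hWYc : ((Wop A).map Complex.ofReal) *ᵥ Yc =
      (4 * (c : ℂ) ^ 2 - 1) • Yc - (2 * (c : ℂ)) • Xc := by
    rw [hYc_def, hmap y, hWy]
    funext p
    simp only [Pi.sub_apply, Pi.smul_apply, smul_eq_mul, hXc_def]
    push_cast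
    ring
  have hXc0 : Xc ≠ 0 := by
    intro h
    have := congrFun h (i₁, j₁)
    simp only [hXc_def, Pi.zero_apply, Complex.ofReal_eq_zero] at this
    exact hxp this
  have hYc0 : Yc ≠ 0 := by
    intro h
    have := congrFun h (i₁, j₂)
    simp only [hYc_def, Pi.zero_apply, Complex.ofReal_eq_zero] at this
    exact hyp this
  -- eigenvector equation for z = c ± s i
  have hgen : ∀ t : ℝ, t ^ 2 + c ^ 2 = 1 →
      ((Wop A).map Complex.ofReal) *ᵥ (Xc - ((c : ℂ) + (t : ℂ) * Complex.I) • Yc)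
        = (((2 * c ^ 2 - 1 : ℝ) : ℂ) + ((2 * t * c : ℝ) : ℂ) * Complex.I) •
            (Xc - ((c : ℂ) + (t : ℂ) * Complex.I) • Yc) := by
    intro t ht
    have htc : (t : ℂ) ^ 2 + (c : ℂ) ^ 2 = 1 := by exact_mod_cast ht
    rw [Matrix.mulVec_sub, Matrix.mulVec_smul, hWXc, hWYc]
    funext p
    simp only [Pi.sub_apply, Pi.smul_apply, smul_eq_mul]
    push_cast
    linear_combination qsve_key (Xc p) (Yc p) (c : ℂ) (t : ℂ) htc
  clear_value c θ s u x y Xc Yc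
  by_cases hs : s = 0
  · -- degenerate case : c = 1, θ = 0, eigenvalue 1
    have hc1' : c = 1 := by
      have h2 : (c - 1) * (c + 1) = 0 := by linear_combination hs2 - s * hs
      rcases mul_eq_zero.mp h2 with h3 | h3
      · linarith
      · linarith
    have he1 : Complex.exp ((θ : ℂ) * Complex.I) = 1 := by
      rw [hexp, hs, hc1']; norm_num
    have he1' : Complex.exp (-(θ : ℂ) * Complex.I) = 1 := by
      rw [hexp', hs, hc1']; norm_num
    have hW1 : ∀ w : Fin N₁ × Fin N₂ → ℂ, w ≠ 0 ∧
        ((Wop A).map Complex.ofReal) *ᵥ w = w →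
        (w ≠ 0 ∧ ((Wop A).map Complex.ofReal) *ᵥ w = Complex.exp ((θ:ℂ) * Complex.I) • w)
        ∧ (w ≠ 0 ∧ ((Wop A).map Complex.ofReal) *ᵥ w
            = Complex.exp (-(θ:ℂ) * Complex.I) • w) := by
      rintro w ⟨hw0, hww⟩
      refine ⟨⟨hw0, ?_⟩, ⟨hw0, ?_⟩⟩
      · rw [he1, one_smul]; exact hww
      · rw [he1', one_smul]; exact hww
    by_cases hxy : Xc = Yc
    · have hfix : ((Wop A).map Complex.ofReal) *ᵥ Xc = Xc := by
        rw [hWXc, hc1', ← hxy]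
        funext p; simp only [Pi.sub_apply, Pi.smul_apply, smul_eq_mul]; push_cast; ring
      obtain ⟨h1, h2⟩ := hW1 Xc ⟨hXc0, hfix⟩
      exact ⟨⟨Xc, h1⟩, ⟨Xc, h2⟩⟩
    · have hfix : ((Wop A).map Complex.ofReal) *ᵥ (Xc - Yc) = Xc - Yc := by
        rw [Matrix.mulVec_sub, hWXc, hWYc, hc1']
        funext p; simp only [Pi.sub_apply, Pi.smul_apply, smul_eq_mul]; push_cast; ring
      have hne : Xc - Yc ≠ 0 := sub_ne_zero.mpr hxy
      obtain ⟨h1, h2⟩ := hW1 (Xc - Yc) ⟨hne, hfix⟩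
      exact ⟨⟨Xc - Yc, h1⟩, ⟨Xc - Yc, h2⟩⟩
  · -- generic case : s > 0
    have hspos : 0 < s := lt_of_le_of_ne hs0 (Ne.symm hs)
    have hnz : ∀ t : ℝ, t ≠ 0 → Xc - ((c : ℂ) + (t : ℂ) * Complex.I) • Yc ≠ 0 := by
      intro t ht h
      have := congrFun h (i₁, j₂)
      simp only [Pi.sub_apply, Pi.smul_apply, smul_eq_mul, Pi.zero_apply, hXc_def,
        hYc_def] at this
      have him := congrArg Complex.im this
      simp only [Complex.sub_im, Complex.mul_im, Complex.add_re, Complex.add_im,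
        Complex.ofReal_re, Complex.ofReal_im, Complex.mul_re, Complex.I_re, Complex.I_im,
        Complex.zero_im] at him
      have : t * y (i₁, j₂) = 0 := by linarith [him]
      rcases mul_eq_zero.mp this with h' | h'
      · exact ht h'
      · exact hyp h'
    refine ⟨⟨Xc - ((c : ℂ) + (s : ℂ) * Complex.I) • Yc, hnz s hs, ?_⟩,
      ⟨Xc - ((c : ℂ) + ((-s : ℝ) : ℂ) * Complex.I) • Yc, hnz (-s) (neg_ne_zero.mpr hs), ?_⟩⟩
    · rw [hexp]
      exact hgen s hs2
    · rw [show (-(θ : ℂ)) * Complex.I = -(θ:ℂ) * Complex.I from rfl, hexp']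
      exact hgen (-s) (by linear_combination hs2)
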